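/- For all 0 < p < q < 1, there exists a sequence (a_n)_{n≥0} of real numbers such that the sequence of p-binomial means (a^p_n)_{n≥0} converges to 0, but the sequence of q-binomial means (a^q_n)_{n≥0} does not converge. -/

import Mathlib

open Filter Finset

/-- The `p`-binomial mean of a sequence. -/
noncomputable def binMean (p : ℝ) (a : ℕ → ℝ) (n : ℕ) : ℝ :=
  ∑ i ∈ Finset.range (n + 1), (n.choose i : ℝ) * p ^ i * (1 - p) ^ (n - i) * a i

lemma binMean_geom (p c : ℝ) (n : ℕ) :
    binMean p (fun i => c ^ i) n = (p * c + (1 - p)) ^ n := by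
  rw [binMean, add_pow]
  refine Finset.sum_congr rfl fun i _ => ?_
  rw [mul_pow]
  ring

theorem exists_seq_binMean_p_tendsto_zero_binMean_q_diverges
    (p q : ℝ) (hp0 : 0 < p) (hpq : p < q) (hq1 : q < 1) :
    ∃ a : ℕ → ℝ, Tendsto (binMean p a) atTop (nhds 0) ∧
      ¬ ∃ l : ℝ, Tendsto (binMean q a) atTop (nhds l) := by
  have hq0 : 0 < q := hp0.trans hpq
  set c : ℝ := 1 - (1/p + 1/q) with hc
  refine ⟨fun i => c ^ i, ?_, ?_⟩
  · have h1 : ∀ n, binMean p (fun i => c ^ i) n = (-(p/q)) ^ n := by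
      intro n
      rw [binMean_geom]
      congr 1
      field_simp [hc]
      rw [hc]; field_simp; ring
    rw [show binMean p (fun i => c ^ i) = fun n => (-(p/q)) ^ n from funext h1]
    apply tendsto_pow_atTop_nhds_zero_of_abs_lt_one
    rw [abs_neg, abs_of_pos (div_pos hp0 hq0)]
    rw [div_lt_one hq0]; exact hpq
  · rintro ⟨l, hl⟩
    have h2 : ∀ n, binMean q (fun i => c ^ i) n = (-(q/p)) ^ n := by
      intro n
      rw [binMean_geom]
      congr 1
      field_simp [hc]
      rw [hc]; field_simp; ring
    have habs : Tendsto (fun n => |binMean q (fun i => c ^ i) n|) atTop atTop := by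
      have : ∀ n, |binMean q (fun i => c ^ i) n| = (q/p) ^ n := by
        intro n
        rw [h2, abs_pow, abs_neg, abs_of_pos (div_pos hq0 hp0)]
      rw [show (fun n => |binMean q (fun i => c ^ i) n|) = fun n => (q/p) ^ n from funext this]
      exact tendsto_pow_atTop_atTop_of_one_lt ((one_lt_div hp0).2 hpq)
    exact not_tendsto_nhds_of_tendsto_atTop habs _ (hl.abs)
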